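/- Let a, b, c ∈ ℂ and let G = {(1,0), (a,1), (b,1), (c,1)} ⊆ ℂ². Then G fails 𝕋-PR (phase retrieval) in ℂ² if and only if b = a, or b ≠ a and (c − a)/(b − a) is a real number. -/

import Mathlib

open MeasureTheory Set
open scoped ComplexConjugate
open Complex (I)

noncomputable section

/-- The unit circle in the complex plane. -/
def unitCircle : Set ℂ := {z : ℂ | ‖z‖ = 1}

/-- `G` does `Θ`-PR in `H`.  The paper inner product `⟨f,g⟩` (linear in the first argument)
corresponds to Mathlib's `inner g f` (which is linear in the second argument). -/
def DoesPR {H : Type*} [NormedAddCommGroup H] [InnerProductSpace ℂ H]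
    (G : Set H) (Θ : Set ℂ) : Prop :=
  ∀ f h : H, (∀ g ∈ G, ∃ θ ∈ Θ, (inner ℂ g f : ℂ) = θ * (inner ℂ g h : ℂ)) →
    ∃ θ ∈ Θ, f = θ • h

/-- The vector `(x, y)` in `ℂ²`. -/
def vec2 (x y : ℂ) : EuclideanSpace ℂ (Fin 2) := WithLp.toLp 2 ![x, y]

/-- The system `G(a,b,c) = {(1,0), (a,1), (b,1), (c,1)} ⊆ ℂ²`. -/
def Gabc (a b c : ℂ) : Set (EuclideanSpace ℂ (Fin 2)) :=
  {vec2 1 0, vec2 a 1, vec2 b 1, vec2 c 1}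


lemma exists_theta {z w : ℂ} (h : z * conj z = w * conj w) :
    ∃ θ ∈ unitCircle, z = θ * w := by
  rcases eq_or_ne w 0 with hw | hw
  · have hz : z = 0 := by
      rw [hw, Complex.mul_conj, Complex.mul_conj] at h
      simpa [Complex.normSq_eq_zero] using h
    exact ⟨1, by simp [unitCircle], by simp [hz, hw]⟩
  · have habs : ‖z‖ = ‖w‖ := by
      rw [Complex.mul_conj, Complex.mul_conj] at h
      have : Complex.normSq z = Complex.normSq w := by exact_mod_cast h
      rw [Complex.norm_def, Complex.norm_def, this]
    refine ⟨z / w, ?_, ?_⟩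
    · simp only [unitCircle, Set.mem_setOf_eq, norm_div, habs]
      exact div_self (norm_ne_zero_iff.mpr hw)
    · field_simp

lemma meas_eq {z w : ℂ} (h : ∃ θ ∈ unitCircle, z = θ * w) :
    z * conj z = w * conj w := by
  obtain ⟨θ, hθ, rfl⟩ := h
  have h1 : θ * conj θ = 1 := by
    rw [Complex.mul_conj, Complex.normSq_eq_norm_sq, hθ]; norm_num
  rw [map_mul]
  linear_combination w * conj w * h1

lemma inner_vec2 (x y : ℂ) (f : EuclideanSpace ℂ (Fin 2)) :
    (inner ℂ (vec2 x y) f : ℂ) = conj x * f 0 + conj y * f 1 := by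
  simp [vec2, PiLp.inner_apply, Fin.sum_univ_two, RCLike.inner_apply]
  ring

lemma vec2_zero (x y : ℂ) : vec2 x y 0 = x := by simp [vec2]
lemma vec2_one (x y : ℂ) : vec2 x y 1 = y := by simp [vec2]

lemma lemA (a e : ℂ) (he : e ≠ 0) (s t : ℝ) (b c : ℂ)
    (hb : b = a + (s : ℂ) * e) (hc : c = a + (t : ℂ) * e) :
    ¬ DoesPR (Gabc a b c) unitCircle := by
  intro hPR
  set N : ℝ := Complex.normSq e with hNdef
  have hN : N ≠ 0 := by
    have := Complex.normSq_pos.mpr he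
    simp only [hNdef]; positivity
  set w : ℂ := I * (conj e * a - conj a * e) with hwdef
  have hwim : w.im = 0 := by
    simp [hwdef, Complex.mul_im, Complex.mul_re, Complex.sub_re, Complex.sub_im]
    ring
  have hwre : (w.re : ℂ) = w := by
    apply Complex.ext <;> simp [hwim]
  set r : ℝ := w.re / (2 * N) - 1/2 with hrdef
  have K : (2*(r:ℂ)+1) * (conj e * e) = w := by
    have h1 : conj e * e = (N : ℂ) := by
      rw [mul_comm, Complex.mul_conj]
    rw [h1]
    have : (2*r+1) * N = w.re := by
      rw [hrdef]; field_simp; ring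
    calc (2*(r:ℂ)+1) * (N:ℂ) = (((2*r+1)*N : ℝ) : ℂ) := by push_cast; ring
      _ = ((w.re : ℝ) : ℂ) := Complex.ofReal_inj.mpr this
      _ = w := hwre
  set f1 : ℂ := -((1+r : ℝ) : ℂ) * (I * conj e) with hf1
  set h1 : ℂ := -((r : ℝ) : ℂ) * (I * conj e) with hh1
  set f : EuclideanSpace ℂ (Fin 2) := vec2 1 f1 with hf
  set h : EuclideanSpace ℂ (Fin 2) := vec2 1 h1 with hh
  have claim : ∀ t' : ℝ, ∃ θ ∈ unitCircle,
      (inner ℂ (vec2 (a + (t':ℂ) * e) 1) f : ℂ) = θ * (inner ℂ (vec2 (a + (t':ℂ) * e) 1) h : ℂ) := by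
    intro t'
    apply exists_theta
    rw [inner_vec2, inner_vec2, hf, hh, vec2_zero, vec2_zero, vec2_one, vec2_one, hf1, hh1]
    simp only [map_add, map_mul, map_sub, map_neg, map_one, Complex.conj_conj,
      Complex.conj_I, Complex.conj_ofReal]
    push_cast
    linear_combination K - (2*(r:ℂ)+1) * (conj e * e) * Complex.I_sq
  have hmeas : ∀ g ∈ Gabc a b c, ∃ θ ∈ unitCircle,
      (inner ℂ g f : ℂ) = θ * (inner ℂ g h : ℂ) := by
    intro g hg
    simp only [Gabc, Set.mem_insert_iff, Set.mem_singleton_iff] at hg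
    rcases hg with rfl | rfl | rfl | rfl
    · refine ⟨1, by simp [unitCircle], ?_⟩
      rw [inner_vec2, inner_vec2]
      simp [hf, hh, vec2_zero, vec2_one]
    · have := claim 0
      simpa using this
    · rw [hb]; exact claim s
    · rw [hc]; exact claim t
  obtain ⟨θ, hθ, hfeq⟩ := hPR f h hmeas
  have h0 : f 0 = θ * h 0 := by rw [hfeq]; simp [PiLp.smul_apply, smul_eq_mul]
  have h1' : f 1 = θ * h 1 := by rw [hfeq]; simp [PiLp.smul_apply, smul_eq_mul]
  rw [hf, hh, vec2_zero, vec2_zero] at h0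
  rw [hf, hh, vec2_one, vec2_one, hf1, hh1] at h1'
  have hθ1 : θ = 1 := by simpa using h0.symm
  rw [hθ1, one_mul] at h1'
  have : I * conj e = 0 := by push_cast at h1'; linear_combination -h1'
  have : conj e = 0 := by
    rcases mul_eq_zero.mp this with h' | h'
    · exact absurd h' Complex.I_ne_zero
    · exact h'
  exact he (by simpa using congrArg conj this)

lemma lemB (a b c : ℂ) (hba : b ≠ a) (him : ((c - a) / (b - a)).im ≠ 0) :
    DoesPR (Gabc a b c) unitCircle := by
  intro f h hmeas
  have mem1 : vec2 1 0 ∈ Gabc a b c := Or.inl rfl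
  have mema : vec2 a 1 ∈ Gabc a b c := Or.inr (Or.inl rfl)
  have memb : vec2 b 1 ∈ Gabc a b c := Or.inr (Or.inr (Or.inl rfl))
  have memc : vec2 c 1 ∈ Gabc a b c := Or.inr (Or.inr (Or.inr rfl))
  have E1 := meas_eq (hmeas _ mem1)
  have Ea := meas_eq (hmeas _ mema)
  have Eb := meas_eq (hmeas _ memb)
  have Ec := meas_eq (hmeas _ memc)
  rw [inner_vec2, inner_vec2] at E1 Ea Eb Ec
  simp only [map_add, map_mul, map_one, map_zero, Complex.conj_conj, zero_mul,
    add_zero, one_mul, mul_one, zero_add] at E1 Ea Eb Ec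
  set F0 := f 0
  set F1 := f 1
  set H0 := h 0
  set H1 := h 1
  -- linear constraints
  have hvb : (conj b - conj a) * (F0 * conj F1 - H0 * conj H1)
      + (b - a) * (conj F0 * F1 - conj H0 * H1) = 0 := by
    linear_combination Eb - Ea - (b * conj b - a * conj a) * E1
  have hvc : (conj c - conj a) * (F0 * conj F1 - H0 * conj H1)
      + (c - a) * (conj F0 * F1 - conj H0 * H1) = 0 := by
    linear_combination Ec - Ea - (c * conj c - a * conj a) * E1
  have hβ : b - a ≠ 0 := sub_ne_zero.mpr hba
  have hk : conj (b - a) * (c - a) - conj (c - a) * (b - a) ≠ 0 := by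
    intro hk0
    apply him
    set z := (c - a) / (b - a) with hz
    have hca : c - a = z * (b - a) := (div_mul_cancel₀ _ hβ).symm
    rw [hca] at hk0
    simp only [map_mul] at hk0
    have h2 : (z - conj z) * (conj (b - a) * (b - a)) = 0 := by linear_combination hk0
    have h3 : conj (b - a) * (b - a) ≠ 0 :=
      mul_ne_zero (star_ne_zero.mpr hβ) hβ
    have h4 : z = conj z := by
      have := (mul_eq_zero.mp h2).resolve_right h3
      linear_combination this
    have := Complex.conj_eq_iff_im.mp h4.symm
    simpa [hz] using this
  have hV : F0 * conj F1 - H0 * conj H1 = 0 := by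
    have comb : (conj (b - a) * (c - a) - conj (c - a) * (b - a))
        * (F0 * conj F1 - H0 * conj H1) = 0 := by
      simp only [map_sub]
      linear_combination (c - a) * hvb - (b - a) * hvc
    exact (mul_eq_zero.mp comb).resolve_left hk
  have hV' : conj F0 * F1 - conj H0 * H1 = 0 := by
    have := congrArg conj hV
    simpa [map_sub, map_mul, Complex.conj_conj] using this
  have hd : F1 * conj F1 = H1 * conj H1 := by
    linear_combination Ea - (a * conj a) * E1 - conj a * hV - a * hV'
  -- build θ
  have habs0 : ‖F0‖ = ‖H0‖ := by
    rw [Complex.mul_conj, Complex.mul_conj] at E1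
    have : Complex.normSq F0 = Complex.normSq H0 := by exact_mod_cast E1
    rw [Complex.norm_def, Complex.norm_def, this]
  have habs1 : ‖F1‖ = ‖H1‖ := by
    rw [Complex.mul_conj, Complex.mul_conj] at hd
    have : Complex.normSq F1 = Complex.normSq H1 := by exact_mod_cast hd
    rw [Complex.norm_def, Complex.norm_def, this]
  by_cases h0 : H0 = 0
  · have hF0 : F0 = 0 := by
      have : ‖F0‖ = 0 := by rw [habs0, h0, norm_zero]
      exact norm_eq_zero.mp this
    by_cases h1 : H1 = 0
    · refine ⟨1, by simp [unitCircle], ?_⟩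
      have hF1 : F1 = 0 := by
        have : ‖F1‖ = 0 := by rw [habs1, h1, norm_zero]
        exact norm_eq_zero.mp this
      rw [one_smul]
      ext i
      fin_cases i
      · exact hF0.trans h0.symm
      · exact hF1.trans h1.symm
    · refine ⟨F1 / H1, ?_, ?_⟩
      · simp only [unitCircle, Set.mem_setOf_eq, norm_div, habs1]
        exact div_self (norm_ne_zero_iff.mpr h1)
      · ext i
        fin_cases i
        · show F0 = F1 / H1 * H0
          rw [hF0, h0, mul_zero]
        · show F1 = F1 / H1 * H1
          field_simp
  · have hF0 : F0 ≠ 0 := by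
      intro hF0
      apply h0
      rw [hF0, norm_zero] at habs0
      exact norm_eq_zero.mp habs0.symm
    refine ⟨F0 / H0, ?_, ?_⟩
    · simp only [unitCircle, Set.mem_setOf_eq, norm_div, habs0]
      exact div_self (norm_ne_zero_iff.mpr h0)
    · have key : F1 * H0 = F0 * H1 := by
        have hc0 : conj F0 ≠ 0 := star_ne_zero.mpr hF0
        have : conj F0 * (F1 * H0) = conj F0 * (F0 * H1) := by
          linear_combination H0 * hV' - H1 * E1
        exact mul_left_cancel₀ hc0 this
      ext i
      fin_cases i
      · show F0 = F0 / H0 * H0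
        field_simp
      · show F1 = F0 / H0 * H1
        rw [div_mul_eq_mul_div, eq_div_iff h0]
        linear_combination key

theorem stmt19 (a b c : ℂ) :
    ¬ DoesPR (Gabc a b c) unitCircle ↔
      b = a ∨ (b ≠ a ∧ ((c - a) / (b - a)).im = 0) := by
  constructor
  · intro hnot
    by_contra hcond
    have hba : b ≠ a := fun hh => hcond (Or.inl hh)
    have him : ((c - a) / (b - a)).im ≠ 0 := fun hh => hcond (Or.inr ⟨hba, hh⟩)
    exact hnot (lemB a b c hba him)
  · rintro (hba | ⟨hba, him⟩)
    · rcases eq_or_ne c a with hca | hca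
      · exact lemA a 1 one_ne_zero 0 0 b c (by simp [hba]) (by simp [hca])
      · refine lemA a (c - a) (sub_ne_zero.mpr hca) 0 1 b c (by simp [hba]) ?_
        push_cast
        ring
    · have hβ : b - a ≠ 0 := sub_ne_zero.mpr hba
      set t : ℝ := ((c - a) / (b - a)).re with ht
      have hz : ((c - a) / (b - a)) = (t : ℂ) := by
        apply Complex.ext <;> simp [him, ht]
      refine lemA a (b - a) hβ 1 t b c (by push_cast; ring) ?_
      have : c - a = (t : ℂ) * (b - a) := by
        rw [← hz]
        exact (div_mul_cancel₀ _ hβ).symm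
      linear_combination this
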